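/- There exists a universal constant C > 0 with the following property. Let ε ∈ (0, 1/4], δ₁, δ₂ ∈ (0, ε], b₁, b₂ ∈ ℝ, and define m̃(w) = b₁ ( 1/(w − δ₁) − 1/w ) + b₂ ( 1/w − 1/(w + δ₂) ) for w ∈ ℂ. If ∫_{D₁(0)} |m̃(w)| dA(w) ≤ K for some K > 0, then |b₁δ₁ + b₂δ₂| ≤ C K / |log ε| and |b₁ − b₂| δ₁ δ₂ ≤ C K ε. -/

import Mathlib

open MeasureTheory

section auxStmt6

open Metric Set

lemma aux_cos : Real.cos (-(1/2) * Real.pi) = 0 := by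
  rw [show (-(1/2) * Real.pi : ℝ) = -(Real.pi/2) by ring, Real.cos_neg, Real.cos_pi_div_two]

lemma aux_sqrt_eq (t : ℝ) :
    (Real.sqrt |t|)⁻¹ = t ^ (-(1/2) : ℝ) + (-t) ^ (-(1/2) : ℝ) := by
  rcases lt_trichotomy t 0 with ht | rfl | ht
  · rw [abs_of_neg ht, Real.rpow_def_of_neg ht, aux_cos, mul_zero, zero_add,
      Real.rpow_neg (by linarith), Real.sqrt_eq_rpow]
  · norm_num [Real.zero_rpow]
  · rw [abs_of_pos ht, Real.rpow_def_of_neg (by linarith : -t < 0), aux_cos, mul_zero, add_zero,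
      Real.rpow_neg ht.le, Real.sqrt_eq_rpow]

lemma aux_u_integrableOn : IntegrableOn (fun t : ℝ => (Real.sqrt |t|)⁻¹) (Ioo (-2 : ℝ) 2) := by
  have h1 : IntervalIntegrable (fun t : ℝ => (Real.sqrt |t|)⁻¹) volume (-2) 2 := by
    have ha : IntervalIntegrable (fun t : ℝ => t ^ (-(1/2) : ℝ)) volume (-2) 2 :=
      intervalIntegral.intervalIntegrable_rpow' (by norm_num)
    have hb : IntervalIntegrable (fun t : ℝ => (-t) ^ (-(1/2) : ℝ)) volume (-2) 2 := by
      have := (intervalIntegral.intervalIntegrable_rpow'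
        (r := (-(1/2) : ℝ)) (a := 2) (b := -2) (by norm_num))
      simpa using (IntervalIntegrable.iff_comp_neg (f := fun t : ℝ => t ^ (-(1/2) : ℝ)) (by simp)).mp this
    have heq : (fun t : ℝ => (Real.sqrt |t|)⁻¹)
        = fun t => t ^ (-(1/2):ℝ) + (-t) ^ (-(1/2):ℝ) := funext aux_sqrt_eq
    rw [heq]; exact ha.add hb
  exact h1.1.mono_set Ioo_subset_Ioc_self

noncomputable def auxU : ℝ → ℝ := (Ioo (-2 : ℝ) 2).indicator (fun t => (Real.sqrt |t|)⁻¹)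

lemma auxU_integrable : Integrable auxU :=
  aux_u_integrableOn.integrable_indicator measurableSet_Ioo

lemma auxH_integrable : Integrable (fun w : ℂ => auxU w.re * auxU w.im) := by
  have hu : Integrable auxU := auxU_integrable
  have hp : Integrable (fun p : ℝ × ℝ => auxU p.1 * auxU p.2) := by
    rw [Measure.volume_eq_prod]; exact hu.mul_prod hu
  have := (Complex.volume_preserving_equiv_real_prod).integrable_comp_emb
    (Complex.measurableEquivRealProd.measurableEmbedding)
    (g := fun p : ℝ × ℝ => auxU p.1 * auxU p.2)
  rw [← this] at hp
  exact hp

lemma aux_line_re (c : ℝ) : volume {w : ℂ | w.re = c} = 0 := by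
  have h : {w : ℂ | w.re = c} = Complex.measurableEquivRealProd ⁻¹' ({c} ×ˢ (univ : Set ℝ)) := by
    ext w; simp [eq_comm]
  rw [h, (Complex.volume_preserving_equiv_real_prod).measure_preimage
    ((measurableSet_singleton c).prod MeasurableSet.univ).nullMeasurableSet]
  rw [Measure.volume_eq_prod, Measure.prod_prod]
  simp

lemma aux_line_im (c : ℝ) : volume {w : ℂ | w.im = c} = 0 := by
  have h : {w : ℂ | w.im = c} = Complex.measurableEquivRealProd ⁻¹' ((univ : Set ℝ) ×ˢ {c}) := by
    ext w; simp [eq_comm]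
  rw [h, (Complex.volume_preserving_equiv_real_prod).measure_preimage
    (MeasurableSet.univ.prod (measurableSet_singleton c)).nullMeasurableSet]
  rw [Measure.volume_eq_prod, Measure.prod_prod]
  simp

lemma aux_inv_integrableOn (a : ℂ) (ha : ‖a‖ ≤ 1) :
    IntegrableOn (fun w : ℂ => (w - a)⁻¹) (ball (0:ℂ) 1) := by
  have hg : IntegrableOn (fun w : ℂ => auxU (w - a).re * auxU (w - a).im) (ball (0:ℂ) 1) :=
    (auxH_integrable.comp_sub_right a).integrableOn
  apply Integrable.mono' hg
  · exact ((measurable_id.sub_const a).inv).aestronglyMeasurable.restrict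
  · have hN : volume ({w : ℂ | w.re = a.re} ∪ {w : ℂ | w.im = a.im}) = 0 :=
      measure_union_null (aux_line_re a.re) (aux_line_im a.im)
    have h1 : ∀ᵐ w : ℂ ∂(volume.restrict (ball (0:ℂ) 1)),
        w ∉ ({w : ℂ | w.re = a.re} ∪ {w : ℂ | w.im = a.im}) :=
      Filter.Eventually.filter_mono (ae_mono Measure.restrict_le_self)
        (measure_eq_zero_iff_ae_notMem.mp hN)
    filter_upwards [h1, ae_restrict_mem measurableSet_ball] with w hw hwball
    simp only [mem_union, mem_setOf_eq, not_or] at hw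
    obtain ⟨hre, him⟩ := hw
    set x := (w - a).re with hx
    set y := (w - a).im with hy
    have hx0 : x ≠ 0 := by simp [hx, Complex.sub_re, sub_ne_zero, hre]
    have hy0 : y ≠ 0 := by simp [hy, Complex.sub_im, sub_ne_zero, him]
    have hwa : ‖w - a‖ < 2 := by
      calc ‖w - a‖ ≤ ‖w‖ + ‖a‖ := norm_sub_le _ _
      _ < 2 := by have := mem_ball_zero_iff.mp hwball; linarith
    have hxlt : |x| < 2 := lt_of_le_of_lt (Complex.abs_re_le_norm _) hwa
    have hylt : |y| < 2 := lt_of_le_of_lt (Complex.abs_im_le_norm _) hwa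
    have hux : auxU x = (Real.sqrt |x|)⁻¹ := by
      rw [auxU, indicator_of_mem]
      constructor <;> [linarith [neg_abs_le x, abs_nonneg x]; linarith [le_abs_self x]]
    have huy : auxU y = (Real.sqrt |y|)⁻¹ := by
      rw [auxU, indicator_of_mem]
      constructor <;> [linarith [neg_abs_le y, abs_nonneg y]; linarith [le_abs_self y]]
    have hsq : Real.sqrt |x| * Real.sqrt |y| ≤ ‖w - a‖ := by
      rw [← Real.sqrt_mul (abs_nonneg x)]
      have h1 : ‖w - a‖ = Real.sqrt (x ^ 2 + y ^ 2) := by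
        rw [Complex.norm_def, Complex.normSq_apply, hx, hy]; ring_nf
      rw [h1]
      apply Real.sqrt_le_sqrt
      nlinarith [sq_nonneg (|x| - |y|), abs_nonneg x, abs_nonneg y, sq_abs x, sq_abs y]
    have hpos : 0 < Real.sqrt |x| * Real.sqrt |y| := by
      apply mul_pos <;> exact Real.sqrt_pos.mpr (abs_pos.mpr (by assumption))
    rw [norm_inv, hux, huy, ← mul_inv]
    exact inv_anti₀ hpos hsq

lemma aux_m_integrableOn (δ₁ δ₂ b₁ b₂ : ℝ) (h₁ : 0 < δ₁) (h₁' : δ₁ ≤ 1) (h₂ : 0 < δ₂)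
    (h₂' : δ₂ ≤ 1) :
    IntegrableOn (fun w : ℂ =>
      (b₁ : ℂ) * (1 / (w - (δ₁ : ℂ)) - 1 / w) + (b₂ : ℂ) * (1 / w - 1 / (w + (δ₂ : ℂ))))
      (ball (0:ℂ) 1) := by
  have i0 : IntegrableOn (fun w : ℂ => w⁻¹) (ball (0:ℂ) 1) := by
    simpa using aux_inv_integrableOn 0 (by simp)
  have i1 : IntegrableOn (fun w : ℂ => (w - (δ₁:ℂ))⁻¹) (ball (0:ℂ) 1) :=
    aux_inv_integrableOn δ₁ (by simpa [Complex.norm_real, abs_of_pos h₁] using h₁')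
  have i2 : IntegrableOn (fun w : ℂ => (w + (δ₂:ℂ))⁻¹) (ball (0:ℂ) 1) := by
    have := aux_inv_integrableOn (-δ₂) (by simpa [Complex.norm_real, abs_of_pos h₂] using h₂')
    simpa [sub_neg_eq_add] using this
  simp only [one_div]
  exact (((i1.sub i0).const_mul _).add ((i0.sub i2).const_mul _))

lemma aux_pointwise (ε δ₁ δ₂ b₁ b₂ : ℝ) (hε : 0 < ε) (h₁ : 0 < δ₁) (h₁' : δ₁ ≤ ε)
    (h₂ : 0 < δ₂) (h₂' : δ₂ ≤ ε) (w : ℂ) (hw : 2 * ε < ‖w‖) :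
    (4/9) * (‖((b₁ * δ₁ + b₂ * δ₂ : ℝ) : ℂ) * w + (((b₁ - b₂) * δ₁ * δ₂ : ℝ) : ℂ)‖ / ‖w‖ ^ 3)
      ≤ ‖(b₁ : ℂ) * (1 / (w - (δ₁ : ℂ)) - 1 / w) + (b₂ : ℂ) * (1 / w - 1 / (w + (δ₂ : ℂ)))‖ := by
  have hw0 : (0:ℝ) < ‖w‖ := by linarith
  have hwne : w ≠ 0 := by simpa using hw0.ne'
  have hd1 : ‖(δ₁ : ℂ)‖ < ‖w‖ := by
    rw [Complex.norm_real, Real.norm_eq_abs, abs_of_pos h₁]; linarith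
  have hd2 : ‖(δ₂ : ℂ)‖ < ‖w‖ := by
    rw [Complex.norm_real, Real.norm_eq_abs, abs_of_pos h₂]; linarith
  have hne1 : w - (δ₁:ℂ) ≠ 0 := by
    intro h; rw [sub_eq_zero] at h; rw [h] at hd1; exact lt_irrefl _ hd1
  have hne2 : w + (δ₂:ℂ) ≠ 0 := by
    intro h
    have : w = -(δ₂:ℂ) := by linear_combination h
    rw [this] at hd2; simp at hd2
  have key : (b₁ : ℂ) * (1 / (w - (δ₁ : ℂ)) - 1 / w) + (b₂ : ℂ) * (1 / w - 1 / (w + (δ₂ : ℂ)))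
      = (((b₁ * δ₁ + b₂ * δ₂ : ℝ) : ℂ) * w + (((b₁ - b₂) * δ₁ * δ₂ : ℝ) : ℂ))
        / (w * (w - δ₁) * (w + δ₂)) := by
    field_simp
    push_cast
    ring_nf
  rw [key, norm_div]
  have hden : ‖w * (w - (δ₁:ℂ)) * (w + (δ₂:ℂ))‖ ≤ (9/4) * ‖w‖ ^ 3 := by
    rw [norm_mul, norm_mul]
    have e1 : ‖w - (δ₁:ℂ)‖ ≤ (3/2) * ‖w‖ := by
      calc ‖w - (δ₁:ℂ)‖ ≤ ‖w‖ + ‖(δ₁:ℂ)‖ := norm_sub_le _ _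
      _ ≤ (3/2) * ‖w‖ := by
          rw [Complex.norm_real, Real.norm_eq_abs, abs_of_pos h₁]; linarith
    have e2 : ‖w + (δ₂:ℂ)‖ ≤ (3/2) * ‖w‖ := by
      calc ‖w + (δ₂:ℂ)‖ ≤ ‖w‖ + ‖(δ₂:ℂ)‖ := norm_add_le _ _
      _ ≤ (3/2) * ‖w‖ := by
          rw [Complex.norm_real, Real.norm_eq_abs, abs_of_pos h₂]; linarith
    calc ‖w‖ * ‖w - (δ₁:ℂ)‖ * ‖w + (δ₂:ℂ)‖ ≤ ‖w‖ * ((3/2) * ‖w‖) * ((3/2) * ‖w‖) := by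
          apply mul_le_mul (mul_le_mul le_rfl e1 (norm_nonneg _) hw0.le) e2 (norm_nonneg _)
          positivity
    _ = (9/4) * ‖w‖ ^ 3 := by ring
  have hdenpos : 0 < ‖w * (w - (δ₁:ℂ)) * (w + (δ₂:ℂ))‖ :=
    norm_pos_iff.mpr (by exact mul_ne_zero (mul_ne_zero hwne hne1) hne2)
  have h2 : ‖((b₁ * δ₁ + b₂ * δ₂ : ℝ) : ℂ) * w + (((b₁ - b₂) * δ₁ * δ₂ : ℝ) : ℂ)‖ / ((9/4) * ‖w‖ ^ 3)
      ≤ ‖((b₁ * δ₁ + b₂ * δ₂ : ℝ) : ℂ) * w + (((b₁ - b₂) * δ₁ * δ₂ : ℝ) : ℂ)‖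
        / ‖w * (w - (δ₁:ℂ)) * (w + (δ₂:ℂ))‖ :=
    div_le_div_of_nonneg_left (norm_nonneg _) hdenpos hden
  calc (4/9) * (‖((b₁ * δ₁ + b₂ * δ₂ : ℝ) : ℂ) * w + (((b₁ - b₂) * δ₁ * δ₂ : ℝ) : ℂ)‖ / ‖w‖ ^ 3)
      = ‖((b₁ * δ₁ + b₂ * δ₂ : ℝ) : ℂ) * w + (((b₁ - b₂) * δ₁ * δ₂ : ℝ) : ℂ)‖ / ((9/4) * ‖w‖ ^ 3) := by
        have hx : ‖w‖ ^ 3 ≠ 0 := by positivity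
        field_simp
    _ ≤ _ := h2

lemma aux_radial (c : ℝ) (hc0 : 0 < c) (hc1 : c < 1) (k : ℕ) :
    ∫ w in ball (0:ℂ) 1 \ closedBall (0:ℂ) c, (‖w‖ ^ k)⁻¹
      = 2 * Real.pi * ∫ y in Ioo c 1, y * ((y:ℝ) ^ k)⁻¹ := by
  set f : ℝ → ℝ := (Ioo c 1).indicator (fun y => ((y:ℝ) ^ k)⁻¹) with hf
  have hiff : ∀ x : ℂ, x ∈ ball (0:ℂ) 1 \ closedBall (0:ℂ) c ↔ ‖x‖ ∈ Ioo c 1 := by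
    intro x
    simp only [mem_diff, mem_ball_zero_iff, mem_closedBall_zero_iff, mem_Ioo, not_le]
    tauto
  have h1 : ∀ x : ℂ, f ‖x‖ = (ball (0:ℂ) 1 \ closedBall (0:ℂ) c).indicator
      (fun w => (‖w‖ ^ k)⁻¹) x := by
    intro x
    by_cases hx : ‖x‖ ∈ Ioo c 1
    · rw [hf, indicator_of_mem hx, indicator_of_mem ((hiff x).mpr hx)]
    · rw [hf, indicator_of_notMem hx, indicator_of_notMem (fun h => hx ((hiff x).mp h))]
  have h2 := integral_fun_norm_addHaar (volume : Measure ℂ) f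
  simp only [h1] at h2
  rw [integral_indicator (measurableSet_ball.diff measurableSet_closedBall)] at h2
  rw [h2, Complex.finrank_real_complex]
  have hvol : (volume (ball (0:ℂ) 1)).toReal = Real.pi := by
    rw [Complex.volume_ball]
    simp [ENNReal.ofReal_one, Real.pi_nonneg]
  rw [measureReal_def, hvol]
  have h3 : ∫ y in Ioi (0:ℝ), y ^ (2 - 1) • f y = ∫ y in Ioo c 1, y * ((y:ℝ) ^ k)⁻¹ := by
    have : ∀ y : ℝ, y ^ (2 - 1) • f y
        = (Ioo c 1).indicator (fun y => y * ((y:ℝ) ^ k)⁻¹) y := by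
      intro y
      by_cases hy : y ∈ Ioo c 1
      · rw [hf, indicator_of_mem hy, indicator_of_mem hy]; simp [smul_eq_mul]
      · rw [hf, indicator_of_notMem hy, indicator_of_notMem hy]; simp
    simp only [this]
    rw [setIntegral_indicator measurableSet_Ioo,
      inter_eq_self_of_subset_right (Ioo_subset_Ioi_self.trans (Ioi_subset_Ioi hc0.le))]
  rw [h3]
  simp [smul_eq_mul]
  ring

lemma aux_R2 (c : ℝ) (hc0 : 0 < c) (hc1 : c < 1) :
    ∫ w in ball (0:ℂ) 1 \ closedBall (0:ℂ) c, (‖w‖ ^ 2)⁻¹ = 2 * Real.pi * (- Real.log c) := by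
  rw [aux_radial c hc0 hc1 2]
  congr 1
  have h : ∫ y in Ioo c 1, y * ((y:ℝ) ^ 2)⁻¹ = ∫ y in Ioo c 1, y⁻¹ := by
    apply setIntegral_congr_fun measurableSet_Ioo
    intro y hy
    have : y ≠ 0 := (lt_trans hc0 hy.1).ne'
    field_simp
  rw [h, ← integral_Ioc_eq_integral_Ioo, ← intervalIntegral.integral_of_le hc1.le,
    integral_inv_of_pos hc0 one_pos, one_div, Real.log_inv]

lemma aux_R3 (c : ℝ) (hc0 : 0 < c) (hc1 : c < 1) :
    ∫ w in ball (0:ℂ) 1 \ closedBall (0:ℂ) c, (‖w‖ ^ 3)⁻¹ = 2 * Real.pi * (c⁻¹ - 1) := by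
  rw [aux_radial c hc0 hc1 3]
  congr 1
  have h : ∫ y in Ioo c 1, y * ((y:ℝ) ^ 3)⁻¹ = ∫ y in Ioo c 1, y ^ (-2 : ℤ) := by
    apply setIntegral_congr_fun measurableSet_Ioo
    intro y hy
    have hy0 : y ≠ 0 := (lt_trans hc0 hy.1).ne'
    show y * (y ^ 3)⁻¹ = y ^ (-2 : ℤ)
    rw [zpow_neg, zpow_two]
    field_simp
  rw [h, ← integral_Ioc_eq_integral_Ioo, ← intervalIntegral.integral_of_le hc1.le,
    integral_zpow (Or.inr ⟨by norm_num, notMem_uIcc_of_lt hc0 one_pos⟩)]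
  norm_num
  ring

lemma aux_intOn (c : ℝ) (hc : 0 < c) (g : ℂ → ℝ) (hg : ContinuousOn g ({(0:ℂ)}ᶜ)) :
    IntegrableOn g (ball (0:ℂ) 1 \ closedBall (0:ℂ) c) := by
  have hsub : ball (0:ℂ) 1 \ closedBall (0:ℂ) c ⊆ closedBall (0:ℂ) 1 \ ball (0:ℂ) c :=
    diff_subset_diff ball_subset_closedBall ball_subset_closedBall
  have hK : IsCompact (closedBall (0:ℂ) 1 \ ball (0:ℂ) c) :=
    (isCompact_closedBall _ _).diff isOpen_ball
  have hKsub : closedBall (0:ℂ) 1 \ ball (0:ℂ) c ⊆ ({(0:ℂ)}ᶜ) := by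
    intro w hw
    simp only [mem_compl_iff, mem_singleton_iff]
    intro h0
    exact hw.2 (by simp [h0, hc])
  exact ((hg.mono hKsub).integrableOn_compact hK).mono_set hsub

lemma aux_symm (c : ℝ) (A B : ℝ) :
    ∫ w in ball (0:ℂ) 1 \ closedBall (0:ℂ) c, ‖((B:ℝ):ℂ) - ((A:ℝ):ℂ) * w‖ / ‖w‖ ^ 3
      = ∫ w in ball (0:ℂ) 1 \ closedBall (0:ℂ) c, ‖((A:ℝ):ℂ) * w + ((B:ℝ):ℂ)‖ / ‖w‖ ^ 3 := by
  set S := ball (0:ℂ) 1 \ closedBall (0:ℂ) c with hSdef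
  have hS : MeasurableSet S := measurableSet_ball.diff measurableSet_closedBall
  have hsymm : ∀ x : ℂ, -x ∈ S ↔ x ∈ S := by
    intro x
    simp [hSdef, mem_diff, mem_ball_zero_iff, mem_closedBall_zero_iff]
  have key : ∀ x : ℂ, S.indicator (fun w => ‖((A:ℝ):ℂ) * w + ((B:ℝ):ℂ)‖ / ‖w‖ ^ 3) (-x)
      = S.indicator (fun w => ‖((B:ℝ):ℂ) - ((A:ℝ):ℂ) * w‖ / ‖w‖ ^ 3) x := by
    intro x
    by_cases hx : x ∈ S
    · rw [indicator_of_mem ((hsymm x).mpr hx), indicator_of_mem hx]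
      have h1 : ((A:ℝ):ℂ) * (-x) + ((B:ℝ):ℂ) = ((B:ℝ):ℂ) - ((A:ℝ):ℂ) * x := by ring
      rw [h1, norm_neg]
    · rw [indicator_of_notMem (fun h => hx ((hsymm x).mp h)), indicator_of_notMem hx]
  rw [← integral_indicator hS, ← integral_indicator hS]
  rw [← integral_neg_eq_self
    (S.indicator (fun w => ‖((A:ℝ):ℂ) * w + ((B:ℝ):ℂ)‖ / ‖w‖ ^ 3)) volume]
  simp only [key]

lemma aux_div3 (t r : ℝ) (ht : 0 < t) : r * (t ^ 2)⁻¹ = (r * t) / t ^ 3 := by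
  field_simp

lemma aux_div3' (t r : ℝ) (ht : 0 < t) : r * (t ^ 3)⁻¹ = r / t ^ 3 := by
  field_simp

set_option maxHeartbeats 1000000 in
/-- quantitative control of the coefficients of the model function
`m̃(w) = b₁(1/(w−δ₁) − 1/w) + b₂(1/w − 1/(w+δ₂))` in terms of its `L¹`-norm on the
unit disc. -/
theorem stmt6 : ∃ C > (0:ℝ), ∀ ε δ₁ δ₂ b₁ b₂ K : ℝ,
    0 < ε → ε ≤ 1 / 4 → 0 < δ₁ → δ₁ ≤ ε → 0 < δ₂ → δ₂ ≤ ε → 0 < K →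
    (∫ w in Metric.ball (0:ℂ) 1,
        ‖(b₁ : ℂ) * (1 / (w - (δ₁ : ℂ)) - 1 / w) + (b₂ : ℂ) * (1 / w - 1 / (w + (δ₂ : ℂ)))‖) ≤ K →
    |b₁ * δ₁ + b₂ * δ₂| ≤ C * K / |Real.log ε| ∧ |b₁ - b₂| * δ₁ * δ₂ ≤ C * K * ε := by
  refine ⟨2, by norm_num, ?_⟩
  intro ε δ₁ δ₂ b₁ b₂ K hε hε4 h1 h1' h2 h2' hK hint
  set A : ℝ := b₁ * δ₁ + b₂ * δ₂ with hA
  set B : ℝ := (b₁ - b₂) * δ₁ * δ₂ with hB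
  set c : ℝ := 2 * ε with hc
  have hc0 : 0 < c := by positivity
  have hc1 : c < 1 := by rw [hc]; linarith
  set S := ball (0:ℂ) 1 \ closedBall (0:ℂ) c with hSdef
  have hS : MeasurableSet S := measurableSet_ball.diff measurableSet_closedBall
  set mfun : ℂ → ℂ := fun w =>
    (b₁ : ℂ) * (1 / (w - (δ₁ : ℂ)) - 1 / w) + (b₂ : ℂ) * (1 / w - 1 / (w + (δ₂ : ℂ))) with hmdef
  have hm : IntegrableOn mfun (ball (0:ℂ) 1) :=
    aux_m_integrableOn δ₁ δ₂ b₁ b₂ h1 (by linarith) h2 (by linarith)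
  have hmnorm : IntegrableOn (fun w => ‖mfun w‖) (ball (0:ℂ) 1) := hm.norm
  -- restrict hypothesis to annulus
  have hIK : ∫ w in S, ‖mfun w‖ ≤ K := by
    refine le_trans ?_ hint
    apply setIntegral_mono_set hmnorm
    · exact Filter.Eventually.of_forall (fun w => norm_nonneg _)
    · exact (diff_subset : S ⊆ ball (0:ℂ) 1).eventuallyLE
  -- the two model integrands
  set g₁ : ℂ → ℝ := fun w => ‖((A:ℝ):ℂ) * w + ((B:ℝ):ℂ)‖ / ‖w‖ ^ 3 with hg₁def
  set g₂ : ℂ → ℝ := fun w => ‖((B:ℝ):ℂ) - ((A:ℝ):ℂ) * w‖ / ‖w‖ ^ 3 with hg₂def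
  have hcont : ∀ z₁ z₂ : ℂ, ContinuousOn (fun w : ℂ => ‖z₁ * w + z₂‖ / ‖w‖ ^ 3) ({(0:ℂ)}ᶜ) := by
    intro z₁ z₂
    apply ContinuousOn.div
    · exact (Continuous.continuousOn (by continuity))
    · exact (Continuous.continuousOn (by continuity))
    · intro x hx
      simp only [mem_compl_iff, mem_singleton_iff] at hx
      exact pow_ne_zero _ (norm_ne_zero_iff.mpr hx)
  have hg₁i : IntegrableOn g₁ S := aux_intOn c hc0 g₁ (hcont _ _)
  have hg₂i : IntegrableOn g₂ S := by
    apply aux_intOn c hc0 g₂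
    have : g₂ = fun w : ℂ => ‖(-(A:ℝ):ℂ) * w + ((B:ℝ):ℂ)‖ / ‖w‖ ^ 3 := by
      funext w; rw [hg₂def]; push_cast; ring_nf
    rw [this]; exact hcont _ _
  have hr2cont : ContinuousOn (fun w : ℂ => (‖w‖ ^ 2)⁻¹) ({(0:ℂ)}ᶜ) := by
    apply ContinuousOn.inv₀ (Continuous.continuousOn (by continuity))
    intro x hx
    simp only [mem_compl_iff, mem_singleton_iff] at hx
    exact pow_ne_zero _ (norm_ne_zero_iff.mpr hx)
  have hr3cont : ContinuousOn (fun w : ℂ => (‖w‖ ^ 3)⁻¹) ({(0:ℂ)}ᶜ) := by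
    apply ContinuousOn.inv₀ (Continuous.continuousOn (by continuity))
    intro x hx
    simp only [mem_compl_iff, mem_singleton_iff] at hx
    exact pow_ne_zero _ (norm_ne_zero_iff.mpr hx)
  have hr2i : IntegrableOn (fun w : ℂ => (‖w‖ ^ 2)⁻¹) S := aux_intOn c hc0 _ hr2cont
  have hr3i : IntegrableOn (fun w : ℂ => (‖w‖ ^ 3)⁻¹) S := aux_intOn c hc0 _ hr3cont
  -- step A : (4/9) ∫_S g₁ ≤ K
  have hstepA : (4/9) * ∫ w in S, g₁ w ≤ K := by
    rw [← integral_const_mul]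
    refine le_trans (setIntegral_mono_on (hg₁i.const_mul _)
      (hmnorm.mono_set diff_subset) hS ?_) hIK
    intro w hw
    have hwc : 2 * ε < ‖w‖ := by
      have := hw.2
      rw [mem_closedBall_zero_iff, not_le] at this
      exact this
    exact aux_pointwise ε δ₁ δ₂ b₁ b₂ hε h1 h1' h2 h2' w hwc
  -- symmetrization
  have hsym : ∫ w in S, g₂ w = ∫ w in S, g₁ w := aux_symm c A B
  -- step B1 : |A| bound
  have hB1 : 2 * |A| * (2 * Real.pi * (- Real.log c)) ≤ 2 * ∫ w in S, g₁ w := by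
    have hpt : ∀ w ∈ S, 2 * |A| * (‖w‖ ^ 2)⁻¹ ≤ g₁ w + g₂ w := by
      intro w hw
      have hw0 : (0:ℝ) < ‖w‖ := by
        have := hw.2; rw [mem_closedBall_zero_iff, not_le] at this; linarith
      have key : ‖((2 * A : ℝ) : ℂ) * w‖ ≤ ‖((A:ℝ):ℂ) * w + ((B:ℝ):ℂ)‖
          + ‖((B:ℝ):ℂ) - ((A:ℝ):ℂ) * w‖ := by
        have : ((2 * A : ℝ) : ℂ) * w
            = (((A:ℝ):ℂ) * w + ((B:ℝ):ℂ)) - (((B:ℝ):ℂ) - ((A:ℝ):ℂ) * w) := by push_cast; ring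
        rw [this]; exact norm_sub_le _ _
      have hnorm2 : ‖((2 * A : ℝ) : ℂ) * w‖ = 2 * |A| * ‖w‖ := by
        rw [norm_mul, Complex.norm_real, Real.norm_eq_abs, abs_mul, abs_two]
      have heq : 2 * |A| * (‖w‖ ^ 2)⁻¹ = (2 * |A| * ‖w‖) / ‖w‖ ^ 3 := aux_div3 _ _ hw0
      rw [hg₁def, hg₂def, ← add_div, heq]
      gcongr
      exact hnorm2 ▸ key
    calc 2 * |A| * (2 * Real.pi * (- Real.log c))
        = ∫ w in S, 2 * |A| * (‖w‖ ^ 2)⁻¹ := by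
          rw [integral_const_mul, aux_R2 c hc0 hc1]
      _ ≤ ∫ w in S, (g₁ w + g₂ w) :=
          setIntegral_mono_on (hr2i.const_mul _) (hg₁i.add hg₂i) hS hpt
      _ = 2 * ∫ w in S, g₁ w := by
          rw [integral_add hg₁i hg₂i, hsym]; ring
  -- step B2 : |B| bound
  have hB2 : 2 * |B| * (2 * Real.pi * (c⁻¹ - 1)) ≤ 2 * ∫ w in S, g₁ w := by
    have hpt : ∀ w ∈ S, 2 * |B| * (‖w‖ ^ 3)⁻¹ ≤ g₁ w + g₂ w := by
      intro w hw
      have hw0 : (0:ℝ) < ‖w‖ := by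
        have := hw.2; rw [mem_closedBall_zero_iff, not_le] at this; linarith
      have key : ‖((2 * B : ℝ) : ℂ)‖ ≤ ‖((A:ℝ):ℂ) * w + ((B:ℝ):ℂ)‖
          + ‖((B:ℝ):ℂ) - ((A:ℝ):ℂ) * w‖ := by
        have : ((2 * B : ℝ) : ℂ)
            = (((A:ℝ):ℂ) * w + ((B:ℝ):ℂ)) + (((B:ℝ):ℂ) - ((A:ℝ):ℂ) * w) := by push_cast; ring
        rw [this]; exact norm_add_le _ _
      have hnorm2 : ‖((2 * B : ℝ) : ℂ)‖ = 2 * |B| := by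
        rw [Complex.norm_real, Real.norm_eq_abs, abs_mul, abs_two]
      have heq : 2 * |B| * (‖w‖ ^ 3)⁻¹ = (2 * |B|) / ‖w‖ ^ 3 := aux_div3' _ _ hw0
      rw [hg₁def, hg₂def, ← add_div, heq]
      gcongr
      exact hnorm2 ▸ key
    calc 2 * |B| * (2 * Real.pi * (c⁻¹ - 1))
        = ∫ w in S, 2 * |B| * (‖w‖ ^ 3)⁻¹ := by
          rw [integral_const_mul, aux_R3 c hc0 hc1]
      _ ≤ ∫ w in S, (g₁ w + g₂ w) :=
          setIntegral_mono_on (hr3i.const_mul _) (hg₁i.add hg₂i) hS hpt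
      _ = 2 * ∫ w in S, g₁ w := by
          rw [integral_add hg₁i hg₂i, hsym]; ring
  -- final arithmetic
  have hπ : (3:ℝ) < Real.pi := Real.pi_gt_three
  have hlogε : Real.log ε < 0 := Real.log_neg hε (by linarith)
  have habs : |Real.log ε| = - Real.log ε := abs_of_neg hlogε
  have hlog4 : Real.log ε ≤ - Real.log 4 := by
    have h := Real.log_le_log hε hε4
    rw [show (1/4 : ℝ) = 4⁻¹ by norm_num, Real.log_inv] at h
    exact h
  have hlog2pos : (0:ℝ) < Real.log 4 := Real.log_pos (by norm_num)
  have hLpos : 0 < |Real.log ε| := by rw [habs]; linarith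
  have hlogc : - Real.log c ≥ (1/2) * |Real.log ε| := by
    rw [hc, Real.log_mul (by norm_num) hε.ne', habs]
    have h24 : Real.log 2 = Real.log 4 / 2 := by
      rw [show (4:ℝ) = 2^2 by norm_num, Real.log_pow]; push_cast; ring
    linarith
  have hcinv : c⁻¹ - 1 ≥ 1 / (4 * ε) := by
    rw [hc]
    have h4ε : 4 * ε ≤ 1 := by linarith
    have h4εpos : (0:ℝ) < 4 * ε := by linarith
    have : (1:ℝ) ≤ 1 / (4 * ε) := by
      rw [le_div_iff₀ h4εpos]; linarith
    have heq : (2 * ε)⁻¹ = 2 * (1 / (4 * ε)) := by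
      rw [mul_one_div, eq_div_iff h4εpos.ne']
      rw [inv_mul_eq_div, div_eq_iff (by positivity : (2:ℝ) * ε ≠ 0)]
      ring
    rw [heq]; linarith
  have hJnn : 0 ≤ ∫ w in S, g₁ w := by
    apply setIntegral_nonneg hS
    intro w hw
    rw [hg₁def]
    positivity
  have hnegc : (0:ℝ) ≤ - Real.log c := by linarith
  have hJA : |A| * (2 * Real.pi * (- Real.log c)) ≤ ∫ w in S, g₁ w := by linarith
  have hJB : |B| * (2 * Real.pi * (c⁻¹ - 1)) ≤ ∫ w in S, g₁ w := by linarith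
  have hKA : (4/9) * (|A| * (2 * Real.pi * (- Real.log c))) ≤ K := by
    refine le_trans ?_ hstepA
    have := mul_le_mul_of_nonneg_left hJA (by norm_num : (0:ℝ) ≤ 4/9)
    linarith
  have hKB : (4/9) * (|B| * (2 * Real.pi * (c⁻¹ - 1))) ≤ K := by
    refine le_trans ?_ hstepA
    have := mul_le_mul_of_nonneg_left hJB (by norm_num : (0:ℝ) ≤ 4/9)
    linarith
  set L : ℝ := |Real.log ε| with hL
  constructor
  · -- |A| ≤ 2 * K / L
    have h3L : 3 * L ≤ 2 * Real.pi * (- Real.log c) := by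
      nlinarith [mul_nonneg (by linarith : (0:ℝ) ≤ Real.pi - 3) hnegc]
    have t1 : |A| * (3 * L) ≤ |A| * (2 * Real.pi * (- Real.log c)) :=
      mul_le_mul_of_nonneg_left h3L (abs_nonneg A)
    have t2 : |A| * L ≤ 2 * K := by nlinarith
    rw [le_div_iff₀ hLpos]
    exact t2
  · -- |B| * δ's
    have hBabs : |b₁ - b₂| * δ₁ * δ₂ = |B| := by
      rw [hB, abs_mul, abs_mul, abs_of_pos h1, abs_of_pos h2]
    rw [hBabs]
    have hεinvnn : (0:ℝ) ≤ 1 / (4 * ε) := by positivity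
    have h3e : 3 / (2 * ε) ≤ 2 * Real.pi * (c⁻¹ - 1) := by
      have : (3:ℝ) / (2 * ε) = 6 * (1 / (4 * ε)) := by
        rw [div_eq_iff (by positivity : (2:ℝ) * ε ≠ 0), mul_one_div, div_mul_eq_mul_div,
          eq_div_iff (by positivity : (4:ℝ) * ε ≠ 0)]
        ring
      rw [this]
      nlinarith [mul_nonneg (by linarith : (0:ℝ) ≤ Real.pi - 3) hεinvnn]
    have t1 : |B| * (3 / (2 * ε)) ≤ |B| * (2 * Real.pi * (c⁻¹ - 1)) :=
      mul_le_mul_of_nonneg_left h3e (abs_nonneg B)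
    have t2 : |B| * (3 / (2 * ε)) ≤ (9/4) * K := by nlinarith
    have t2' : |B| * 3 / (2 * ε) ≤ 9/4 * K := by rw [mul_div_assoc]; exact t2
    have t3 : |B| * 3 ≤ 9/4 * K * (2 * ε) := (div_le_iff₀ (by positivity)).mp t2'
    nlinarith [mul_nonneg hK.le hε.le]

end auxStmt6
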